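/- arXiv:2109.00394 — 2 statements merged into one kernel-verified Lean document; each statement's English description precedes it below -/
import Mathlib

section
/- For every x ∈ ℝⁿ one has lim_{t→∞} E_{Q,M}(t·x) = Σ_{S⊆[r]} E_{Q,M_S}(0) · δ_{B(M_S,x)=0} · ∏_{j∈[r]∖S} sgn(B(m_j,x)), where δ_{B(M_S,x)=0} equals 1 if B(m_k,x)=0 for all k∈S and 0 otherwise. In particular, if B(m_j,x) ≠ 0 for all j ∈ [r], then lim_{t→∞} E_{Q,M}(t·x) = ∏_{j=1}^r sgn(B(m_j,x)). -/
open MeasureTheory Filter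
open scoped Real Matrix

attribute [local instance] Classical.propDecidable

noncomputable section

/-- The bilinear form `B(x,y) = xᵀAy` associated with the matrix `A`. -/
def bilin {n : ℕ} (A : Matrix (Fin n) (Fin n) ℝ) (x y : Fin n → ℝ) : ℝ :=
  ∑ i, ∑ j, x i * A i j * y j

/-- The quadratic form `Q(x) = B(x,x)/2`. -/
def quad {n : ℕ} (A : Matrix (Fin n) (Fin n) ℝ) (x : Fin n → ℝ) : ℝ := bilin A x x / 2

/-- The real matrix associated to an integral matrix. -/
def Rmat {n : ℕ} (A : Matrix (Fin n) (Fin n) ℤ) : Matrix (Fin n) (Fin n) ℝ :=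
  A.map ((↑) : ℤ → ℝ)

/-- The generalized error function `E_{Q, M_S}(x)`, with sign factors ranging over the
columns of `M` indexed by `S`; for `S = univ` this is `E_{Q,M}(x)`, and `E_{Q,∅} = 1`
corresponds to `S = ∅` (up to the Gaussian integral). -/
def genErr {n r : ℕ} (A : Matrix (Fin n) (Fin n) ℝ) (M : Fin r → Fin n → ℝ)
    (S : Finset (Fin r)) (x : Fin n → ℝ) : ℝ :=
  Real.sqrt A.det *
    ∫ y : Fin n → ℝ,
      (∏ j ∈ S, Real.sign (bilin A (M j) y)) * Real.exp (-(2 * Real.pi * quad A (y - x)))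

/-! ### Auxiliary lemmas -/

open scoped MatrixOrder in
/-- Square root of a positive semidefinite real matrix. -/
def Matrix.PosSemidef.sqrt {n : ℕ} {A : Matrix (Fin n) (Fin n) ℝ} (_hA : A.PosSemidef) :
    Matrix (Fin n) (Fin n) ℝ :=
  CFC.sqrt A

open scoped MatrixOrder in
lemma Matrix.PosSemidef.sqrt_mul_self {n : ℕ} {A : Matrix (Fin n) (Fin n) ℝ}
    (hA : A.PosSemidef) : hA.sqrt * hA.sqrt = A :=
  CFC.sqrt_mul_sqrt_self A hA.nonneg

open scoped MatrixOrder in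
lemma Matrix.PosSemidef.posSemidef_sqrt {n : ℕ} {A : Matrix (Fin n) (Fin n) ℝ}
    (hA : A.PosSemidef) : hA.sqrt.PosSemidef :=
  Matrix.nonneg_iff_posSemidef.mp (CFC.sqrt_nonneg A)

lemma measurable_realSign : Measurable Real.sign := by
  have h : Real.sign = fun r : ℝ => if r < 0 then (-1 : ℝ) else if 0 < r then 1 else 0 := by
    funext r
    rcases lt_trichotomy r 0 with hr | hr | hr
    · rw [Real.sign_of_neg hr, if_pos hr]
    · subst hr; rw [Real.sign_zero, if_neg (lt_irrefl _), if_neg (lt_irrefl _)]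
    · rw [Real.sign_of_pos hr, if_neg (by linarith), if_pos hr]
  rw [h]
  exact Measurable.ite (measurableSet_lt measurable_id measurable_const) measurable_const
    (Measurable.ite (measurableSet_lt measurable_const measurable_id) measurable_const
      measurable_const)

lemma abs_realSign_le_one (r : ℝ) : |Real.sign r| ≤ 1 := by
  rcases Real.sign_apply_eq r with h | h | h <;> simp [h]

lemma bilin_add_right {n : ℕ} (A : Matrix (Fin n) (Fin n) ℝ) (m y z : Fin n → ℝ) :
    bilin A m (y + z) = bilin A m y + bilin A m z := by
  unfold bilin
  rw [← Finset.sum_add_distrib]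
  refine Finset.sum_congr rfl fun i _ => ?_
  rw [← Finset.sum_add_distrib]
  refine Finset.sum_congr rfl fun j _ => ?_
  simp only [Pi.add_apply]; ring

lemma bilin_smul_right {n : ℕ} (A : Matrix (Fin n) (Fin n) ℝ) (m z : Fin n → ℝ) (t : ℝ) :
    bilin A m (t • z) = t * bilin A m z := by
  unfold bilin
  rw [Finset.mul_sum]
  refine Finset.sum_congr rfl fun i _ => ?_
  rw [Finset.mul_sum]
  refine Finset.sum_congr rfl fun j _ => ?_
  simp only [Pi.smul_apply, smul_eq_mul]; ring

lemma measurable_bilin {n : ℕ} (A : Matrix (Fin n) (Fin n) ℝ) (m : Fin n → ℝ) :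
    Measurable fun y : Fin n → ℝ => bilin A m y := by
  unfold bilin
  refine Finset.measurable_sum _ fun i _ => Finset.measurable_sum _ fun j _ => ?_
  exact (measurable_pi_apply j).const_mul _

lemma continuous_quad {n : ℕ} (A : Matrix (Fin n) (Fin n) ℝ) :
    Continuous fun y : Fin n → ℝ => quad A y := by
  unfold quad bilin
  apply Continuous.div_const
  refine continuous_finset_sum _ fun i _ => continuous_finset_sum _ fun j _ => ?_
  exact ((continuous_apply i).mul continuous_const).mul (continuous_apply j)

/-! ### Gaussian integral for a positive definite quadratic form -/

section Gauss

variable {n : ℕ} {A : Matrix (Fin n) (Fin n) ℝ} (hA : A.PosDef)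

lemma bilin_self_eq_sum_sq (y : Fin n → ℝ) :
    bilin A y y = ∑ i, ((hA.posSemidef.sqrt *ᵥ y) i) ^ 2 := by
  set R := hA.posSemidef.sqrt with hR
  have hsym : Rᵀ = R := by
    have := hA.posSemidef.posSemidef_sqrt.isHermitian
    rw [← Matrix.conjTranspose_eq_transpose_of_trivial]; exact this
  have h1 : bilin A y y = y ⬝ᵥ (A *ᵥ y) := by
    unfold bilin
    simp only [dotProduct, Matrix.mulVec, dotProduct]
    refine Finset.sum_congr rfl fun i _ => ?_
    rw [Finset.mul_sum]
    refine Finset.sum_congr rfl fun j _ => by ring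
  have h2 : A *ᵥ y = R *ᵥ (R *ᵥ y) := by
    rw [Matrix.mulVec_mulVec, hA.posSemidef.sqrt_mul_self]
  rw [h1, h2, Matrix.dotProduct_mulVec, ← Matrix.mulVec_transpose, hsym]
  simp [dotProduct, sq]

lemma gauss_exp_eq (y : Fin n → ℝ) :
    Real.exp (-(2 * Real.pi * quad A y)) =
      ∏ i, Real.exp (-Real.pi * ((hA.posSemidef.sqrt *ᵥ y) i) ^ 2) := by
  rw [← Real.exp_sum]
  congr 1
  have h : 2 * quad A y = ∑ i, ((hA.posSemidef.sqrt *ᵥ y) i) ^ 2 := by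
    rw [quad]; rw [bilin_self_eq_sum_sq hA]; ring
  calc -(2 * Real.pi * quad A y) = -Real.pi * (2 * quad A y) := by ring
    _ = -Real.pi * ∑ i, ((hA.posSemidef.sqrt *ᵥ y) i) ^ 2 := by rw [h]
    _ = ∑ i, -Real.pi * ((hA.posSemidef.sqrt *ᵥ y) i) ^ 2 := Finset.mul_sum _ _ _

lemma gauss_det_ne_zero : (hA.posSemidef.sqrt).det ≠ 0 := by
  intro h
  have : A.det = 0 := by
    rw [← hA.posSemidef.sqrt_mul_self, Matrix.det_mul, h, mul_zero]
  exact hA.det_pos.ne' this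

lemma gauss_f_integrable :
    Integrable (fun z : Fin n → ℝ => ∏ i, Real.exp (-Real.pi * (z i) ^ 2)) := by
  exact Integrable.fintype_prod (f := fun _ x => Real.exp (-Real.pi * x ^ 2))
    fun i => integrable_exp_neg_mul_sq Real.pi_pos

lemma gauss_f_integral :
    (∫ z : Fin n → ℝ, ∏ i, Real.exp (-Real.pi * (z i) ^ 2)) = 1 := by
  rw [MeasureTheory.volume_pi, MeasureTheory.integral_fintype_prod_eq_pow (fun x : ℝ => Real.exp (-Real.pi * x ^ 2)),
    integral_gaussian, div_self Real.pi_ne_zero, Real.sqrt_one, one_pow]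

include hA in
lemma gauss_comp_eq (y : Fin n → ℝ) :
    (fun z : Fin n → ℝ => ∏ i, Real.exp (-Real.pi * (z i) ^ 2))
        (Matrix.toLin' hA.posSemidef.sqrt y)
      = Real.exp (-(2 * Real.pi * quad A y)) := by
  rw [gauss_exp_eq hA]
  simp [Matrix.toLin'_apply]

include hA in
lemma gauss_integrable :
    Integrable (fun y : Fin n → ℝ => Real.exp (-(2 * Real.pi * quad A y))) := by
  set R := hA.posSemidef.sqrt with hR
  have hmap : Measure.map (Matrix.toLin' R) volume
      = ENNReal.ofReal |R.det⁻¹| • volume :=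
    Real.map_matrix_volume_pi_eq_smul_volume_pi (gauss_det_ne_zero hA)
  have hLmeas : Measurable (Matrix.toLin' R) :=
    Continuous.measurable (LinearMap.continuous_on_pi _)
  have hfc : Continuous fun z : Fin n → ℝ => ∏ i, Real.exp (-Real.pi * (z i) ^ 2) := by
    refine continuous_finset_prod _ fun i _ => ?_
    exact Real.continuous_exp.comp ((continuous_const.mul ((continuous_apply i).pow 2)))
  have hfmap : Integrable (fun z : Fin n → ℝ => ∏ i, Real.exp (-Real.pi * (z i) ^ 2))
      (Measure.map (Matrix.toLin' R) volume) := by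
    rw [hmap]
    exact (gauss_f_integrable).smul_measure ENNReal.ofReal_ne_top
  have := (integrable_map_measure hfc.aestronglyMeasurable hLmeas.aemeasurable).mp hfmap
  refine this.congr (Filter.Eventually.of_forall fun y => ?_)
  exact gauss_comp_eq hA y

include hA in
lemma gauss_integral :
    Real.sqrt A.det * ∫ y : Fin n → ℝ, Real.exp (-(2 * Real.pi * quad A y)) = 1 := by
  set R := hA.posSemidef.sqrt with hR
  have hmap : Measure.map (Matrix.toLin' R) volume
      = ENNReal.ofReal |R.det⁻¹| • volume :=
    Real.map_matrix_volume_pi_eq_smul_volume_pi (gauss_det_ne_zero hA)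
  have hLmeas : Measurable (Matrix.toLin' R) :=
    Continuous.measurable (LinearMap.continuous_on_pi _)
  have hfc : Continuous fun z : Fin n → ℝ => ∏ i, Real.exp (-Real.pi * (z i) ^ 2) := by
    refine continuous_finset_prod _ fun i _ => ?_
    exact Real.continuous_exp.comp ((continuous_const.mul ((continuous_apply i).pow 2)))
  have h1 : (∫ y : Fin n → ℝ, Real.exp (-(2 * Real.pi * quad A y)))
      = ∫ z : Fin n → ℝ, (∏ i, Real.exp (-Real.pi * (z i) ^ 2))
          ∂(Measure.map (Matrix.toLin' R) volume) := by
    rw [MeasureTheory.integral_map hLmeas.aemeasurable hfc.aestronglyMeasurable]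
    exact integral_congr_ae (Filter.Eventually.of_forall fun y => (gauss_comp_eq hA y).symm)
  have hdetA : Real.sqrt A.det = |R.det| := by
    have : A.det = R.det ^ 2 := by
      rw [← hA.posSemidef.sqrt_mul_self, Matrix.det_mul]; ring
    rw [this, Real.sqrt_sq_eq_abs]
  rw [h1, hmap, integral_smul_measure, gauss_f_integral, hdetA]
  simp only [smul_eq_mul, mul_one]
  rw [ENNReal.toReal_ofReal (abs_nonneg _), abs_inv]
  exact mul_inv_cancel₀ (abs_ne_zero.mpr (gauss_det_ne_zero hA))

end Gauss

/-! ### The main limit -/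

lemma main_tendsto {n r : ℕ} (A : Matrix (Fin n) (Fin n) ℝ) (hA : A.PosDef)
    (M : Fin r → Fin n → ℝ) (x : Fin n → ℝ) :
    Tendsto (fun t : ℝ => genErr A M Finset.univ (t • x)) atTop
      (nhds (genErr A M (Finset.univ.filter fun j => bilin A (M j) x = 0) 0 *
        ∏ j ∈ Finset.univ \ (Finset.univ.filter fun j => bilin A (M j) x = 0),
          Real.sign (bilin A (M j) x))) := by
  set S0 : Finset (Fin r) := Finset.univ.filter (fun j => bilin A (M j) x = 0) with hS0
  set g : (Fin n → ℝ) → ℝ := fun y => Real.exp (-(2 * Real.pi * quad A y)) with hg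
  have hgc : Continuous g :=
    Real.continuous_exp.comp ((continuous_const.mul (continuous_quad A)).neg)
  -- translation
  have hrepr : ∀ t : ℝ, genErr A M Finset.univ (t • x)
      = Real.sqrt A.det * ∫ y : Fin n → ℝ,
          (∏ j, Real.sign (bilin A (M j) y + t * bilin A (M j) x)) * g y := by
    intro t
    unfold genErr
    congr 1
    rw [← MeasureTheory.integral_add_right_eq_self
      (fun y : Fin n → ℝ => (∏ j ∈ Finset.univ, Real.sign (bilin A (M j) y)) *
        Real.exp (-(2 * Real.pi * quad A (y - t • x)))) (t • x)]
    refine integral_congr_ae (Filter.Eventually.of_forall fun y => ?_)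
    simp only [add_sub_cancel_right, bilin_add_right, bilin_smul_right, hg]
  -- dominated convergence
  have key : Tendsto (fun t : ℝ => ∫ y : Fin n → ℝ,
        (∏ j, Real.sign (bilin A (M j) y + t * bilin A (M j) x)) * g y) atTop
      (nhds (∫ y : Fin n → ℝ,
        ((∏ j ∈ S0, Real.sign (bilin A (M j) y)) *
          ∏ j ∈ Finset.univ \ S0, Real.sign (bilin A (M j) x)) * g y)) := by
    apply tendsto_integral_filter_of_dominated_convergence g
    · refine Filter.Eventually.of_forall fun t => ?_
      refine Measurable.aestronglyMeasurable ?_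
      refine Measurable.mul ?_ hgc.measurable
      exact Finset.measurable_prod _ fun j _ =>
        measurable_realSign.comp ((measurable_bilin A (M j)).add_const _)
    · refine Filter.Eventually.of_forall fun t => Filter.Eventually.of_forall fun y => ?_
      rw [norm_mul, Real.norm_eq_abs, Real.norm_eq_abs,
        abs_of_nonneg (Real.exp_pos _).le]
      calc |∏ j, Real.sign (bilin A (M j) y + t * bilin A (M j) x)| * g y
          ≤ 1 * g y := by
            refine mul_le_mul_of_nonneg_right ?_ (Real.exp_pos _).le
            rw [Finset.abs_prod]
            exact Finset.prod_le_one (fun _ _ => abs_nonneg _)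
              (fun j _ => abs_realSign_le_one _)
        _ = g y := one_mul _
    · exact gauss_integrable hA
    · refine Filter.Eventually.of_forall fun y => ?_
      have hj : ∀ j : Fin r, ∀ᶠ t : ℝ in atTop,
          Real.sign (bilin A (M j) y + t * bilin A (M j) x)
            = (if j ∈ S0 then Real.sign (bilin A (M j) y)
               else Real.sign (bilin A (M j) x)) := by
        intro j
        by_cases hx0 : bilin A (M j) x = 0
        · have hjS : j ∈ S0 := Finset.mem_filter.2 ⟨Finset.mem_univ _, hx0⟩
          refine Filter.Eventually.of_forall fun t => ?_
          rw [hx0, mul_zero, add_zero, if_pos hjS]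
        · have hjS : j ∉ S0 := fun h => hx0 (Finset.mem_filter.1 h).2
          rw [if_neg hjS]
          rcases lt_or_gt_of_ne hx0 with hneg | hpos
          · have ht : Tendsto (fun t : ℝ => bilin A (M j) y + t * bilin A (M j) x)
                atTop atBot :=
              tendsto_atBot_add_const_left _ _ (tendsto_id.atTop_mul_const_of_neg hneg)
            filter_upwards [ht.eventually (eventually_lt_atBot 0)] with t htl
            rw [Real.sign_of_neg htl, Real.sign_of_neg hneg]
          · have ht : Tendsto (fun t : ℝ => bilin A (M j) y + t * bilin A (M j) x)
                atTop atTop :=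
              tendsto_atTop_add_const_left _ _ (tendsto_id.atTop_mul_const hpos)
            filter_upwards [ht.eventually (eventually_gt_atTop 0)] with t htl
            rw [Real.sign_of_pos htl, Real.sign_of_pos hpos]
      have hev : ∀ᶠ t : ℝ in atTop,
          (∏ j, Real.sign (bilin A (M j) y + t * bilin A (M j) x))
            = (∏ j ∈ S0, Real.sign (bilin A (M j) y)) *
                ∏ j ∈ Finset.univ \ S0, Real.sign (bilin A (M j) x) := by
        filter_upwards [Filter.eventually_all.2 hj] with t ht
        calc (∏ j, Real.sign (bilin A (M j) y + t * bilin A (M j) x))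
            = ∏ j, (if j ∈ S0 then Real.sign (bilin A (M j) y)
                else Real.sign (bilin A (M j) x)) := Finset.prod_congr rfl fun j _ => ht j
          _ = (∏ j ∈ S0, Real.sign (bilin A (M j) y)) *
                ∏ j ∈ Finset.univ \ S0, Real.sign (bilin A (M j) x) := by
              have e1 : Finset.univ.filter (· ∈ S0) = S0 := by
                ext j; simp
              have e2 : Finset.univ.filter (fun j => ¬ j ∈ S0) = Finset.univ \ S0 := by
                ext j; simp
              rw [← Finset.prod_filter_mul_prod_filter_not Finset.univ (· ∈ S0)]
              congr 1
              · exact Finset.prod_congr e1 fun j hj' => if_pos hj'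
              · exact Finset.prod_congr e2 fun j hj' => if_neg (Finset.mem_sdiff.1 hj').2
      refine Tendsto.congr' ?_ tendsto_const_nhds
      filter_upwards [hev] with t ht
      rw [ht]
  -- assemble
  have hval : Real.sqrt A.det * ∫ y : Fin n → ℝ,
      ((∏ j ∈ S0, Real.sign (bilin A (M j) y)) *
        ∏ j ∈ Finset.univ \ S0, Real.sign (bilin A (M j) x)) * g y
      = genErr A M S0 0 *
          ∏ j ∈ Finset.univ \ S0, Real.sign (bilin A (M j) x) := by
    have hpt : ∀ y : Fin n → ℝ,
        ((∏ j ∈ S0, Real.sign (bilin A (M j) y)) *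
          ∏ j ∈ Finset.univ \ S0, Real.sign (bilin A (M j) x)) * g y
        = (∏ j ∈ Finset.univ \ S0, Real.sign (bilin A (M j) x)) *
            ((∏ j ∈ S0, Real.sign (bilin A (M j) y)) * g y) := fun y => by ring
    simp only [hpt]
    rw [MeasureTheory.integral_const_mul]
    unfold genErr
    simp only [sub_zero, hg]
    ring
  have hfinal := (key.const_mul (Real.sqrt A.det)).congr fun t => (hrepr t).symm
  rw [hval] at hfinal
  exact hfinal

/-- the limit `lim_{t→∞} E_{Q,M}(t x)` equals the sum over subsets `S ⊆ [r]` of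
`E_{Q,M_S}(0) · δ_{B(M_S,x)=0} · ∏_{j∉S} sgn(B(m_j,x))`; in particular, if all `B(m_j,x) ≠ 0`,
the limit is `∏_j sgn(B(m_j,x))`. -/
theorem statement0 {n r : ℕ} (A : Matrix (Fin n) (Fin n) ℤ) (hA : (Rmat A).PosDef)
    (M : Fin r → Fin n → ℝ) (hM : LinearIndependent ℝ M) (x : Fin n → ℝ) :
    Tendsto (fun t : ℝ => genErr (Rmat A) M Finset.univ (t • x)) atTop
      (nhds (∑ S ∈ (Finset.univ : Finset (Fin r)).powerset,
        genErr (Rmat A) M S 0 *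
          (if ∀ k ∈ S, bilin (Rmat A) (M k) x = 0 then 1 else 0) *
          ∏ j ∈ Finset.univ \ S, Real.sign (bilin (Rmat A) (M j) x))) ∧
    ((∀ j : Fin r, bilin (Rmat A) (M j) x ≠ 0) →
      Tendsto (fun t : ℝ => genErr (Rmat A) M Finset.univ (t • x)) atTop
        (nhds (∏ j : Fin r, Real.sign (bilin (Rmat A) (M j) x)))) := by
  set A' := Rmat A with hA'
  set S0 : Finset (Fin r) := Finset.univ.filter (fun j => bilin A' (M j) x = 0) with hS0
  have key2 := main_tendsto A' hA M x
  constructor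
  · have hsum : (∑ S ∈ (Finset.univ : Finset (Fin r)).powerset,
        genErr A' M S 0 *
          (if ∀ k ∈ S, bilin A' (M k) x = 0 then 1 else 0) *
          ∏ j ∈ Finset.univ \ S, Real.sign (bilin A' (M j) x))
        = genErr A' M S0 0 * ∏ j ∈ Finset.univ \ S0, Real.sign (bilin A' (M j) x) := by
      rw [Finset.sum_eq_single_of_mem S0 (Finset.mem_powerset.2 (Finset.subset_univ _))]
      · rw [if_pos fun k hk => (Finset.mem_filter.1 hk).2, mul_one]
      · intro S _ hne
        by_cases hScond : ∀ k ∈ S, bilin A' (M k) x = 0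
        · rw [if_pos hScond, mul_one]
          have hsub : S ⊆ S0 := fun k hk =>
            Finset.mem_filter.2 ⟨Finset.mem_univ _, hScond k hk⟩
          obtain ⟨j, hjS0, hjS⟩ : ∃ j, j ∈ S0 ∧ j ∉ S := by
            by_contra h
            push_neg at h
            exact hne (Finset.Subset.antisymm hsub h)
          have hz : Real.sign (bilin A' (M j) x) = 0 := by
            rw [(Finset.mem_filter.1 hjS0).2, Real.sign_zero]
          rw [Finset.prod_eq_zero (Finset.mem_sdiff.2 ⟨Finset.mem_univ _, hjS⟩) hz, mul_zero]
        · rw [if_neg hScond, mul_zero, zero_mul]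
    rw [hsum]
    exact key2
  · intro hall
    have hS0empty : S0 = ∅ := by
      rw [hS0]
      refine Finset.filter_eq_empty_iff.2 ?_
      intro j _
      exact hall j
    have h1 : genErr A' M (∅ : Finset (Fin r)) 0 = 1 := by
      unfold genErr
      simp only [Finset.prod_empty, one_mul, sub_zero]
      exact gauss_integral hA
    rw [← hS0, hS0empty, h1, one_mul, Finset.sdiff_empty] at key2
    exact key2
end
end

section
/- For all m, r ∈ Λ = ℤⁿ, the function Ψ̃ satisfies the elliptic transformation Ψ̃_{Q,μ,ℓ,M}(z+mτ+r, 𝔷+mw+r; τ, w) = (−1)^{2Q(m+r)} q^{−Q(m)} e^{−2πiB(m,z)} Ψ̃_{Q,μ,ℓ,M}(z,𝔷;τ,w). -/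
open MeasureTheory Filter
open scoped Real

attribute [local instance] Classical.propDecidable

noncomputable section

/-- The point space `(z, 𝔷, τ, w)`. -/
abbrev Xsp (n : ℕ) := (Fin n → ℂ) × (Fin n → ℂ) × ℂ × ℂ

/-- The complexified bilinear form. -/
def bilinC {n : ℕ} (A : Matrix (Fin n) (Fin n) ℝ) (x y : Fin n → ℂ) : ℂ :=
  ∑ i, ∑ j, x i * (A i j : ℂ) * y j

/-- The complexified quadratic form. -/
def quadC {n : ℕ} (A : Matrix (Fin n) (Fin n) ℝ) (x : Fin n → ℂ) : ℂ := bilinC A x x / 2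

/-- Complexification of a real vector. -/
def vC {n : ℕ} (x : Fin n → ℝ) : Fin n → ℂ := fun i => (x i : ℂ)

/-- The generalized error function at a complex argument, defined by the same convergent
Gaussian integral (agreeing with the analytic continuation from ℝⁿ). -/
def genErrC {n r : ℕ} (A : Matrix (Fin n) (Fin n) ℝ) (M : Fin r → Fin n → ℝ)
    (S : Finset (Fin r)) (x : Fin n → ℂ) : ℂ :=
  (Real.sqrt A.det : ℂ) *
    ∫ y : Fin n → ℝ,
      (∏ j ∈ S, (Real.sign (bilin A (M j) y) : ℂ)) *
        Complex.exp (-(2 * (Real.pi : ℂ) * quadC A (vC y - x)))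

/-- The lattice vector `n = ν + μ + ℓ/2` of the shifted lattice `Λ + μ + ℓ/2`. -/
def latVec {n : ℕ} (μ : Fin n → ℝ) (L : Fin n → ℤ) (ν : Fin n → ℤ) : Fin n → ℝ :=
  fun i => (ν i : ℝ) + μ i + (L i : ℝ) / 2

/-- One term of the lattice sum defining the completed false theta function `Ψ̂`. -/
def psiTerm {n r : ℕ} (A : Matrix (Fin n) (Fin n) ℤ) (μ : Fin n → ℝ) (L : Fin n → ℤ)
    (M : Fin r → Fin n → ℝ) (ν : Fin n → ℤ) (p : Xsp n) : ℂ :=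
  genErrC (Rmat A) M Finset.univ
      ((-Complex.I * (Complex.I * (p.2.2.2 - p.2.2.1)) ^ ((1:ℂ)/2)) •
        (vC (latVec μ L ν) + (p.2.2.2 - p.2.2.1)⁻¹ • (p.2.1 - p.1))) *
    Complex.exp (2 * (Real.pi : ℂ) * Complex.I * p.2.2.1 *
      ((quad (Rmat A) (latVec μ L ν) : ℝ) : ℂ)) *
    Complex.exp (2 * (Real.pi : ℂ) * Complex.I *
      bilinC (Rmat A) (vC (latVec μ L ν)) (p.1 + vC fun i => (L i : ℝ) / 2))

/-- The completed false theta function `Ψ̂_{Q,μ,ℓ,M}(z,𝔷;τ,w)`. -/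
def psiHat {n r : ℕ} (A : Matrix (Fin n) (Fin n) ℤ) (μ : Fin n → ℝ) (L : Fin n → ℤ)
    (M : Fin r → Fin n → ℝ) (p : Xsp n) : ℂ :=
  ∑' ν : Fin n → ℤ, psiTerm A μ L M ν p

/-- The rescaled completion `Ψ̃ = (i(w−τ))^{r/2} Ψ̂`. -/
def psiTilde {n r : ℕ} (A : Matrix (Fin n) (Fin n) ℤ) (μ : Fin n → ℝ) (L : Fin n → ℤ)
    (M : Fin r → Fin n → ℝ) (p : Xsp n) : ℂ :=
  (Complex.I * (p.2.2.2 - p.2.2.1)) ^ ((r : ℂ) / 2) * psiHat A μ L M p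

section helpers
variable {n : ℕ} (A : Matrix (Fin n) (Fin n) ℝ)

lemma bilin_add_left' (x y u : Fin n → ℝ) : bilin A (x + y) u = bilin A x u + bilin A y u := by
  simp [bilin, Pi.add_apply, add_mul, Finset.sum_add_distrib]

lemma bilin_add_right' (x u v : Fin n → ℝ) : bilin A x (u + v) = bilin A x u + bilin A x v := by
  simp [bilin, Pi.add_apply, mul_add, Finset.sum_add_distrib]

lemma bilin_smul_left' (c : ℝ) (x u : Fin n → ℝ) : bilin A (c • x) u = c * bilin A x u := by
  simp only [bilin, Pi.smul_apply, smul_eq_mul, Finset.mul_sum]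
  exact Finset.sum_congr rfl fun i _ => Finset.sum_congr rfl fun j _ => by ring

lemma bilin_smul_right' (c : ℝ) (x u : Fin n → ℝ) : bilin A x (c • u) = c * bilin A x u := by
  simp only [bilin, Pi.smul_apply, smul_eq_mul, Finset.mul_sum]
  exact Finset.sum_congr rfl fun i _ => Finset.sum_congr rfl fun j _ => by ring

lemma bilin_symm' (hsym : ∀ i j, A i j = A j i) (x y : Fin n → ℝ) :
    bilin A x y = bilin A y x := by
  rw [bilin, Finset.sum_comm, bilin]
  exact Finset.sum_congr rfl fun i _ => Finset.sum_congr rfl fun j _ => by rw [hsym i j]; ring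

lemma quad_add' (hsym : ∀ i j, A i j = A j i) (x y : Fin n → ℝ) :
    quad A (x + y) = quad A x + quad A y + bilin A x y := by
  simp only [quad, bilin_add_left', bilin_add_right']
  rw [bilin_symm' A hsym y x]; ring

lemma bilinC_add_left' (x y u : Fin n → ℂ) : bilinC A (x + y) u = bilinC A x u + bilinC A y u := by
  simp [bilinC, Pi.add_apply, add_mul, Finset.sum_add_distrib]

lemma bilinC_add_right' (x u v : Fin n → ℂ) : bilinC A x (u + v) = bilinC A x u + bilinC A x v := by
  simp [bilinC, Pi.add_apply, mul_add, Finset.sum_add_distrib]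

lemma bilinC_smul_right' (c : ℂ) (x u : Fin n → ℂ) : bilinC A x (c • u) = c * bilinC A x u := by
  simp only [bilinC, Pi.smul_apply, smul_eq_mul, Finset.mul_sum]
  exact Finset.sum_congr rfl fun i _ => Finset.sum_congr rfl fun j _ => by ring

lemma bilinC_vC' (a b : Fin n → ℝ) : bilinC A (vC a) (vC b) = ((bilin A a b : ℝ) : ℂ) := by
  rw [bilin]; push_cast [bilinC, vC]; rfl

lemma vC_add' (a b : Fin n → ℝ) : vC (a + b) = vC a + vC b := by
  funext i; simp [vC]

lemma bilin_int_cast' (A : Matrix (Fin n) (Fin n) ℤ) (a b : Fin n → ℤ) :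
    bilin (Rmat A) (fun i => (a i : ℝ)) (fun i => (b i : ℝ))
      = ((∑ i, ∑ j, a i * A i j * b j : ℤ) : ℝ) := by
  rw [bilin]; push_cast [Rmat, Matrix.map_apply]; rfl

lemma neg_one_zpow_shift' (a b c : ℤ) (h : a = b + 2 * c) : (-1 : ℂ) ^ a = (-1) ^ b := by
  subst h
  rw [zpow_add₀ (by norm_num : (-1:ℂ) ≠ 0), zpow_mul]
  norm_num

lemma exp_pi_I_int' (k : ℤ) : Complex.exp ((Real.pi : ℂ) * Complex.I * k) = (-1 : ℂ) ^ k := by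
  rw [show (Real.pi : ℂ) * Complex.I * k = k * (Real.pi * Complex.I) by ring,
    Complex.exp_int_mul, Complex.exp_pi_mul_I]

end helpers

/-- the elliptic transformation
`Ψ̃_μ(z+mτ+r, 𝔷+mw+r; τ,w) = (−1)^{2Q(m+r)} q^{−Q(m)} e^{−2πiB(m,z)} Ψ̃_μ(z,𝔷;τ,w)`
for lattice vectors `m, r ∈ Λ = ℤⁿ`. -/
theorem statement6 {n r : ℕ} (A : Matrix (Fin n) (Fin n) ℤ) (hA : (Rmat A).PosDef)
    (μ : Fin n → ℝ) (L : Fin n → ℤ)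
    (hμ : ∀ k : Fin n → ℤ, ∃ z : ℤ, bilin (Rmat A) μ (fun i => (k i : ℝ)) = z)
    (hL : ∀ k : Fin n → ℤ, ∃ z : ℤ,
      quad (Rmat A) (fun i => (k i : ℝ)) +
        bilin (Rmat A) (fun i => (L i : ℝ)) (fun i => (k i : ℝ)) / 2 = z)
    (M : Fin r → Fin n → ℝ) (hM : LinearIndependent ℝ M)
    (z zz : Fin n → ℂ) (τ w : ℂ) (hτ : 0 < τ.im) (hw : 0 < w.im) (hne : τ ≠ w)
    (m rr : Fin n → ℤ) :
    psiTilde A μ L M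
        (z + τ • vC (fun i => (m i : ℝ)) + vC (fun i => (rr i : ℝ)),
         zz + w • vC (fun i => (m i : ℝ)) + vC (fun i => (rr i : ℝ)), τ, w) =
      (-1 : ℂ) ^ (∑ i, ∑ j, (m i + rr i) * A i j * (m j + rr j)) *
        Complex.exp (-(2 * (Real.pi : ℂ) * Complex.I * τ *
          ((quad (Rmat A) (fun i => (m i : ℝ)) : ℝ) : ℂ))) *
        Complex.exp (-(2 * (Real.pi : ℂ) * Complex.I *
          bilinC (Rmat A) (vC (fun i => (m i : ℝ))) z)) *
        psiTilde A μ L M (z, zz, τ, w) := by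
  have hsym : ∀ i j, Rmat A i j = Rmat A j i := fun i j => by
    simpa using hA.1.apply j i
  have hwt : w - τ ≠ 0 := sub_ne_zero.mpr fun h => hne h.symm
  obtain ⟨z₀, hz₀⟩ := hL (m + rr)
  obtain ⟨kμ, hkμ⟩ := hμ rr
  set N : ℤ := ∑ i, ∑ j, (m i + rr i) * A i j * (m j + rr j) with hNdef
  set NLm : ℤ := ∑ i, ∑ j, L i * A i j * m j with hNLmdef
  set NLr : ℤ := ∑ i, ∑ j, L i * A i j * rr j with hNLrdef
  -- parity relation
  have hpar : N + NLm + NLr = 2 * z₀ := by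
    have e1 : bilin (Rmat A) (fun i => ((m + rr) i : ℝ)) (fun i => ((m + rr) i : ℝ))
        = (N : ℝ) := by
      rw [bilin_int_cast']
      norm_num [Pi.add_apply, hNdef]
    have e2 : bilin (Rmat A) (fun i => (L i : ℝ)) (fun i => ((m + rr) i : ℝ))
        = ((NLm : ℝ) + (NLr : ℝ)) := by
      rw [bilin_int_cast']
      push_cast [Pi.add_apply, hNLmdef, hNLrdef]
      simp [mul_add, Finset.sum_add_distrib]
    rw [quad, e1, e2] at hz₀
    have : (N : ℝ) + NLm + NLr = ((2 * z₀ : ℤ) : ℝ) := by push_cast; linarith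
    exact_mod_cast this
  -- the termwise identity
  have hterm : ∀ ν : Fin n → ℤ,
      psiTerm A μ L M ν
        (z + τ • vC (fun i => (m i : ℝ)) + vC (fun i => (rr i : ℝ)),
         zz + w • vC (fun i => (m i : ℝ)) + vC (fun i => (rr i : ℝ)), τ, w)
      = ((-1 : ℂ) ^ N *
          Complex.exp (-(2 * (Real.pi : ℂ) * Complex.I * τ *
            ((quad (Rmat A) (fun i => (m i : ℝ)) : ℝ) : ℂ))) *
          Complex.exp (-(2 * (Real.pi : ℂ) * Complex.I *
            bilinC (Rmat A) (vC (fun i => (m i : ℝ))) z))) *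
        psiTerm A μ L M (ν + m) (z, zz, τ, w) := by
    intro ν
    have hlat : latVec μ L (ν + m) = latVec μ L ν + (fun i => (m i : ℝ)) := by
      funext i; simp only [latVec, Pi.add_apply]; push_cast; ring
    have hvec : vC (latVec μ L ν) + (w - τ)⁻¹ •
          ((zz + w • vC (fun i => (m i : ℝ)) + vC (fun i => (rr i : ℝ))) -
           (z + τ • vC (fun i => (m i : ℝ)) + vC (fun i => (rr i : ℝ))))
        = vC (latVec μ L (ν + m)) + (w - τ)⁻¹ • (zz - z) := by
      rw [hlat, vC_add']
      funext i
      simp only [Pi.add_apply, Pi.smul_apply, Pi.sub_apply, smul_eq_mul, vC]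
      field_simp
      ring
    set kν : ℤ := ∑ i, ∑ j, ν i * A i j * rr j with hkνdef
    have hlatdec : latVec μ L ν = (fun i => (ν i : ℝ)) + μ + (2⁻¹ : ℝ) • (fun i => (L i : ℝ)) := by
      funext i
      simp only [latVec, Pi.add_apply, Pi.smul_apply, smul_eq_mul]
      ring
    have hf1 : bilin (Rmat A) (latVec μ L ν) (fun i => (rr i : ℝ))
        = (kν : ℝ) + kμ + (NLr : ℝ) / 2 := by
      rw [hlatdec, bilin_add_left', bilin_add_left', bilin_smul_left',
        bilin_int_cast' A ν rr, hkμ, bilin_int_cast' A L rr, ← hkνdef, ← hNLrdef]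
      ring
    have hf2 : bilin (Rmat A) (fun i => (m i : ℝ)) (fun i => (L i : ℝ) / 2)
        = (NLm : ℝ) / 2 := by
      have h2 : (fun i => (L i : ℝ) / 2) = (2⁻¹ : ℝ) • (fun i => (L i : ℝ)) := by
        funext i; simp only [Pi.smul_apply, smul_eq_mul]; ring
      rw [h2, bilin_smul_right', bilin_symm' (Rmat A) hsym, bilin_int_cast' A L m, ← hNLmdef]
      ring
    have hsign : (-1 : ℂ) ^ N
        = Complex.exp ((Real.pi : ℂ) * Complex.I * ((NLr : ℂ) - (NLm : ℂ))) := by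
      rw [show (Real.pi : ℂ) * Complex.I * ((NLr : ℂ) - (NLm : ℂ))
          = (Real.pi : ℂ) * Complex.I * ((NLr - NLm : ℤ) : ℂ) by push_cast; ring,
        exp_pi_I_int']
      exact neg_one_zpow_shift' N (NLr - NLm) (z₀ - NLr) (by omega)
    simp only [psiTerm]
    rw [hvec, hsign]
    have hmain : 2 * (Real.pi : ℂ) * Complex.I * τ * ((quad (Rmat A) (latVec μ L ν) : ℝ) : ℂ) +
        2 * (Real.pi : ℂ) * Complex.I *
          bilinC (Rmat A) (vC (latVec μ L ν))
            ((z + τ • vC (fun i => (m i : ℝ)) + vC (fun i => (rr i : ℝ))) +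
              vC fun i => (L i : ℝ) / 2)
      = ((kν + kμ : ℤ) : ℂ) * (2 * (Real.pi : ℂ) * Complex.I) +
        ((Real.pi : ℂ) * Complex.I * ((NLr : ℂ) - (NLm : ℂ)) +
          (-(2 * (Real.pi : ℂ) * Complex.I * τ *
            ((quad (Rmat A) (fun i => (m i : ℝ)) : ℝ) : ℂ))) +
          (-(2 * (Real.pi : ℂ) * Complex.I *
            bilinC (Rmat A) (vC (fun i => (m i : ℝ))) z)) +
          (2 * (Real.pi : ℂ) * Complex.I * τ *
              ((quad (Rmat A) (latVec μ L (ν + m)) : ℝ) : ℂ) +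
            2 * (Real.pi : ℂ) * Complex.I *
              bilinC (Rmat A) (vC (latVec μ L (ν + m))) (z + vC fun i => (L i : ℝ) / 2))) := by
      rw [hlat, vC_add']
      simp only [bilinC_add_left', bilinC_add_right', bilinC_smul_right', bilinC_vC',
        quad_add' (Rmat A) hsym, hf1, hf2]
      push_cast
      ring
    have hexp : Complex.exp
          (2 * (Real.pi : ℂ) * Complex.I * τ * ((quad (Rmat A) (latVec μ L ν) : ℝ) : ℂ)) *
        Complex.exp (2 * (Real.pi : ℂ) * Complex.I *
          bilinC (Rmat A) (vC (latVec μ L ν))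
            ((z + τ • vC (fun i => (m i : ℝ)) + vC (fun i => (rr i : ℝ))) +
              vC fun i => (L i : ℝ) / 2))
      = Complex.exp ((Real.pi : ℂ) * Complex.I * ((NLr : ℂ) - (NLm : ℂ))) *
        Complex.exp (-(2 * (Real.pi : ℂ) * Complex.I * τ *
          ((quad (Rmat A) (fun i => (m i : ℝ)) : ℝ) : ℂ))) *
        Complex.exp (-(2 * (Real.pi : ℂ) * Complex.I *
          bilinC (Rmat A) (vC (fun i => (m i : ℝ))) z)) *
        (Complex.exp (2 * (Real.pi : ℂ) * Complex.I * τ *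
            ((quad (Rmat A) (latVec μ L (ν + m)) : ℝ) : ℂ)) *
          Complex.exp (2 * (Real.pi : ℂ) * Complex.I *
            bilinC (Rmat A) (vC (latVec μ L (ν + m))) (z + vC fun i => (L i : ℝ) / 2))) := by
      rw [← Complex.exp_add, hmain, Complex.exp_add, Complex.exp_int_mul_two_pi_mul_I, one_mul]
      simp only [Complex.exp_add]
      try ring
    rw [mul_assoc, hexp]
    ring
  -- assemble
  have hhat : psiHat A μ L M
        (z + τ • vC (fun i => (m i : ℝ)) + vC (fun i => (rr i : ℝ)),
         zz + w • vC (fun i => (m i : ℝ)) + vC (fun i => (rr i : ℝ)), τ, w)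
      = ((-1 : ℂ) ^ N *
          Complex.exp (-(2 * (Real.pi : ℂ) * Complex.I * τ *
            ((quad (Rmat A) (fun i => (m i : ℝ)) : ℝ) : ℂ))) *
          Complex.exp (-(2 * (Real.pi : ℂ) * Complex.I *
            bilinC (Rmat A) (vC (fun i => (m i : ℝ))) z))) *
        psiHat A μ L M (z, zz, τ, w) := by
    have heq := (Equiv.addRight m).tsum_eq (fun ν => psiTerm A μ L M ν (z, zz, τ, w))
    simp only [Equiv.coe_addRight] at heq
    calc psiHat A μ L M _ = ∑' ν : Fin n → ℤ, _ * psiTerm A μ L M (ν + m) (z, zz, τ, w) :=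
          tsum_congr hterm
      _ = _ * ∑' ν : Fin n → ℤ, psiTerm A μ L M (ν + m) (z, zz, τ, w) := tsum_mul_left
      _ = _ := by rw [heq]; rfl
  simp only [psiTilde]
  rw [hhat]
  ring
end
end
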